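/- Every morphism of groups f : S₆ → T ⋊ S₆ with π ∘ f = Id (where T is the diagonal torus in GL₆(ℂ), S₆ acts by permuting coordinates, and π is the projection to S₆) has image contained in the kernel of the map γ(t ⋊ σ) = det t. -/

import Mathlib

noncomputable section
open Matrix Complex

/-- The signed permutation matrix with underlying permutation `σ` and signs `a`. -/
def sp (σ : Equiv.Perm (Fin 6)) (a : Fin 6 → ℂ) : Matrix (Fin 6) (Fin 6) ℂ :=
  Matrix.of fun i j => if i = σ j then a j else 0

/-- All entries are `±1`. -/
def signs (a : Fin 6 → ℂ) : Prop := ∀ k, a k = 1 ∨ a k = -1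

/-- The Weyl group of type `B₆`: all signed permutation matrices. -/
def W6Set : Set (GL (Fin 6) ℂ) :=
  {g | ∃ σ a, signs a ∧ (g : Matrix (Fin 6) (Fin 6) ℂ) = sp σ a}

/-- `W₆⁺`: signed permutation matrices of determinant 1. -/
def W6plusSet : Set (GL (Fin 6) ℂ) :=
  {g | ∃ σ a, signs a ∧ (g : Matrix (Fin 6) (Fin 6) ℂ) = sp σ a ∧
    (g : Matrix (Fin 6) (Fin 6) ℂ).det = 1}

/-- `W₆'` (type `D₆`): signed permutation matrices with product of entries 1. -/
def W6'Set : Set (GL (Fin 6) ℂ) :=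
  {g | ∃ σ a, signs a ∧ (∏ k, a k) = 1 ∧ (g : Matrix (Fin 6) (Fin 6) ℂ) = sp σ a}

/-- `A₆'`: diagonal sign matrices with product of entries 1. -/
def A6'Set : Set (GL (Fin 6) ℂ) :=
  {g | ∃ a, signs a ∧ (∏ k, a k) = 1 ∧ (g : Matrix (Fin 6) (Fin 6) ℂ) = Matrix.diagonal a}

/-- `i · Id` as an element of `GL₆(ℂ)`. -/
def iId : GL (Fin 6) ℂ :=
  ⟨Matrix.diagonal (fun _ => Complex.I), Matrix.diagonal (fun _ => -Complex.I),
    by simp [Matrix.diagonal_mul_diagonal, Complex.I_mul_I],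
    by simp [Matrix.diagonal_mul_diagonal, Complex.I_mul_I]⟩

/-- For a monomial matrix, the product of its nonzero entries (γ). -/
def gam (m : Matrix (Fin 6) (Fin 6) ℂ) : ℂ := ∏ j, ∑ i, m i j

/-- `𝒲₆ = ⟨W₆⁺, i·Id⟩`. -/
def CW6Sub : Subgroup (GL (Fin 6) ℂ) := Subgroup.closure (W6plusSet ∪ {iId})

/-- `𝒲₆' = 𝒲₆ ∩ ker γ`. -/
def CW6'Set : Set (GL (Fin 6) ℂ) :=
  {g | g ∈ CW6Sub ∧ gam (g : Matrix (Fin 6) (Fin 6) ℂ) = 1}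

def CW6'Sub : Subgroup (GL (Fin 6) ℂ) := Subgroup.closure CW6'Set

def W6Sub : Subgroup (GL (Fin 6) ℂ) := Subgroup.closure W6Set
def W6plusSub : Subgroup (GL (Fin 6) ℂ) := Subgroup.closure W6plusSet
def W6'Sub : Subgroup (GL (Fin 6) ℂ) := Subgroup.closure W6'Set

lemma sp_mul (σ τ : Equiv.Perm (Fin 6)) (a b : Fin 6 → ℂ) :
    sp σ a * sp τ b = sp (σ * τ) (fun j => a (τ j) * b j) := by
  ext i j
  simp only [sp, Matrix.mul_apply, Matrix.of_apply]
  rw [Finset.sum_eq_single (τ j)]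
  · simp [Equiv.Perm.mul_apply]
    congr
  · intro k _ hk; simp [hk]
  · simp

lemma gam_sp (σ : Equiv.Perm (Fin 6)) (a : Fin 6 → ℂ) : gam (sp σ a) = ∏ j, a j := by
  unfold gam sp
  congr 1; ext j
  simp

lemma sp_one : sp 1 (fun _ => 1) = (1 : Matrix (Fin 6) (Fin 6) ℂ) := by
  ext i j
  simp [sp, Matrix.one_apply, eq_comm]
  congr

lemma sp_pow6_entry (t : Fin 6 → ℂ) :
    (sp (finRotate 6) t ^ 6) 0 0 = t 5 * t 4 * t 3 * t 2 * t 1 * t 0 := by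
  rw [pow_succ, pow_succ, pow_succ, pow_succ, pow_succ, pow_one,
    sp_mul, sp_mul, sp_mul, sp_mul, sp_mul]
  simp only [sp, Matrix.of_apply, Equiv.Perm.mul_apply, finRotate_succ_apply]
  norm_num
  rw [if_pos (by decide)]
  rfl


/-- Any group morphism `f : S₆ → T ⋊ S₆` with `π ∘ f = Id` has image contained in
`ker γ`, where `γ(t ⋊ σ) = det t` is the product of the nonzero entries. -/
theorem stmt_8 (f : Equiv.Perm (Fin 6) →* GL (Fin 6) ℂ)
    (hsec : ∀ σ : Equiv.Perm (Fin 6), ∃ t : Fin 6 → ℂ,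
      ((f σ : GL (Fin 6) ℂ) : Matrix (Fin 6) (Fin 6) ℂ) = sp σ t) :
    ∀ σ : Equiv.Perm (Fin 6),
      gam ((f σ : GL (Fin 6) ℂ) : Matrix (Fin 6) (Fin 6) ℂ) = 1 := by
  classical
  set c : Equiv.Perm (Fin 6) → ℂ :=
    fun σ => gam ((f σ : GL (Fin 6) ℂ) : Matrix (Fin 6) (Fin 6) ℂ) with hc
  have hmul : ∀ σ τ, c (σ * τ) = c σ * c τ := by
    intro σ τ
    obtain ⟨a, ha⟩ := hsec σ
    obtain ⟨b, hb⟩ := hsec τ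
    have hm : ((f (σ * τ) : GL (Fin 6) ℂ) : Matrix (Fin 6) (Fin 6) ℂ)
        = sp (σ * τ) (fun j => a (τ j) * b j) := by
      rw [_root_.map_mul, Units.val_mul, ha, hb, sp_mul]
    simp only [hc, hm, ha, hb, gam_sp]
    rw [Finset.prod_mul_distrib]
    congr 1
    exact Equiv.prod_comp τ a
  have hone : c 1 = 1 := by
    simp only [hc, _root_.map_one, Units.val_one]
    rw [← sp_one, gam_sp]
    simp
  have hconj : ∀ σ τ, c (σ * τ * σ⁻¹) = c τ := by
    intro σ τ
    have h1 : c σ * c σ⁻¹ = 1 := by rw [← hmul, mul_inv_cancel, hone]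
    rw [hmul, hmul]
    calc c σ * c τ * c σ⁻¹ = c τ * (c σ * c σ⁻¹) := by ring
      _ = c τ := by rw [h1, mul_one]
  have hswap : ∀ x y : Fin 6, x ≠ y → c (Equiv.swap x y) = c (Equiv.swap 0 1) := by
    intro x y hxy
    obtain ⟨u, hu⟩ := isConj_iff.1
      (Equiv.Perm.isConj_swap hxy (show (0 : Fin 6) ≠ 1 by decide))
    rw [← hu, hconj]
  have hrho : c (finRotate 6) = 1 := by
    obtain ⟨t, ht⟩ := hsec (finRotate 6)
    have h6 : (sp (finRotate 6) t) ^ 6 = 1 := by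
      rw [← ht, ← Units.val_pow_eq_pow_val, ← map_pow,
        show (finRotate 6 : Equiv.Perm (Fin 6)) ^ 6 = 1 by decide,
        _root_.map_one, Units.val_one]
    have key : t 5 * t 4 * t 3 * t 2 * t 1 * t 0 = 1 := by
      rw [← sp_pow6_entry t, h6, Matrix.one_apply_eq]
    simp only [hc, ht, gam_sp, Fin.prod_univ_six]
    linear_combination key
  have hε2 : c (Equiv.swap 0 1) * c (Equiv.swap 0 1) = 1 := by
    rw [← hmul, Equiv.swap_mul_self, hone]
  have hε : c (Equiv.swap 0 1) = 1 := by
    have hdecomp : (finRotate 6 : Equiv.Perm (Fin 6))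
        = Equiv.swap 0 1 * (Equiv.swap 1 2 * (Equiv.swap 2 3 *
          (Equiv.swap 3 4 * Equiv.swap 4 5))) := by decide
    have h5 : c (finRotate 6) = c (Equiv.swap 0 1) * (c (Equiv.swap 1 2) *
        (c (Equiv.swap 2 3) * (c (Equiv.swap 3 4) * c (Equiv.swap 4 5)))) := by
      rw [hdecomp, hmul, hmul, hmul, hmul]
    rw [hrho, hswap 1 2 (by decide), hswap 2 3 (by decide), hswap 3 4 (by decide),
      hswap 4 5 (by decide)] at h5
    calc c (Equiv.swap 0 1)
        = c (Equiv.swap 0 1) * (c (Equiv.swap 0 1) * c (Equiv.swap 0 1)) *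
          (c (Equiv.swap 0 1) * c (Equiv.swap 0 1)) := by rw [hε2]; ring
      _ = 1 := by rw [show c (Equiv.swap 0 1) * (c (Equiv.swap 0 1) * c (Equiv.swap 0 1)) *
            (c (Equiv.swap 0 1) * c (Equiv.swap 0 1)) = c (Equiv.swap 0 1) *
            (c (Equiv.swap 0 1) * (c (Equiv.swap 0 1) * (c (Equiv.swap 0 1) *
            c (Equiv.swap 0 1)))) by ring, h5]
  let H : Subgroup (Equiv.Perm (Fin 6)) :=
    { carrier := {σ | c σ = 1}
      one_mem' := hone
      mul_mem' := by
        intro a b ha hb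
        show c (a * b) = 1
        rw [hmul]
        exact by rw [ha, hb, one_mul]
      inv_mem' := by
        intro a ha
        show c a⁻¹ = 1
        calc c a⁻¹ = c a⁻¹ * c a := by rw [ha, mul_one]
          _ = c (a⁻¹ * a) := (hmul _ _).symm
          _ = 1 := by rw [inv_mul_cancel, hone] }
  have hle : Subgroup.closure {σ : Equiv.Perm (Fin 6) | σ.IsSwap} ≤ H := by
    rw [Subgroup.closure_le]
    rintro σ ⟨x, y, hxy, rfl⟩
    exact (hswap x y hxy).trans hε
  rw [Equiv.Perm.closure_isSwap] at hle
  intro σ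
  exact hle (Subgroup.mem_top σ)
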